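/- (Corollary: simplified failure bound) Under the assumptions of the utility extension theorem with Δ̃ = LΔ, the failure probability satisfies δ̃ ≤ exp(L²Δ²/σ²) · δ^{1/2}. -/
import Mathlib

open MeasureTheory ProbabilityTheory

/-- Standard normal CDF. -/
noncomputable def Phi (x : ℝ) : ℝ := ((gaussianReal 0 1) (Set.Iic x)).toReal

lemma Phi_eq_integral (x : ℝ) : Phi x = ∫ u in Set.Iic x, gaussianPDFReal 0 1 u := by
  rw [Phi, gaussianReal_apply_eq_integral 0 one_ne_zero (Set.Iic x),
    ENNReal.toReal_ofReal]
  exact setIntegral_nonneg measurableSet_Iic fun u _ => gaussianPDFReal_nonneg 0 1 u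

lemma Phi_shift (t c : ℝ) :
    Phi (c + t) = ∫ u in Set.Iic c, gaussianPDFReal (-t) 1 u := by
  have hmap := gaussianReal_map_add_const (μ := -t) (v := 1) t
  rw [neg_add_cancel] at hmap
  have hpre : (· + t) ⁻¹' (Set.Iic (c + t)) = Set.Iic c := by
    ext z; simp [Set.mem_Iic]
  rw [Phi, ← hmap, Measure.map_apply (measurable_add_const t) measurableSet_Iic, hpre,
    gaussianReal_apply_eq_integral _ one_ne_zero, ENNReal.toReal_ofReal]
  exact setIntegral_nonneg measurableSet_Iic fun u _ => gaussianPDFReal_nonneg _ 1 u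

/-- Pointwise bound: `φ_{-t}(u) - e^v φ(u) ≤ (e^{t²-v}/4) φ_{-2t}(u)`. -/
lemma pointwise_bound (t v u : ℝ) :
    gaussianPDFReal (-t) 1 u - Real.exp v * gaussianPDFReal 0 1 u
      ≤ Real.exp (t ^ 2 - v) / 4 * gaussianPDFReal (-2 * t) 1 u := by
  simp only [gaussianPDFReal, NNReal.coe_one, mul_one]
  set C : ℝ := (Real.sqrt (2 * Real.pi))⁻¹ with hC
  have hCpos : 0 ≤ C := by positivity
  have h1 : Real.exp (-(u - -t) ^ 2 / 2) =
      Real.exp (-(u - 0) ^ 2 / 2) * Real.exp (-(t * u) - t ^ 2 / 2) := by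
    rw [← Real.exp_add]; ring_nf
  have h2 : Real.exp (-(u - -2 * t) ^ 2 / 2) =
      Real.exp (-(u - 0) ^ 2 / 2) * Real.exp (-(2 * (t * u)) - 2 * t ^ 2) := by
    rw [← Real.exp_add]; ring_nf
  rw [h1, h2]
  set B : ℝ := Real.exp (-(u - 0) ^ 2 / 2) with hB
  set w : ℝ := Real.exp (-(t * u) - t ^ 2 / 2) with hw
  have hBpos : 0 < B := Real.exp_pos _
  have hwpos : 0 < w := Real.exp_pos _
  have hp : (0:ℝ) < Real.exp v := Real.exp_pos v
  have hsq : Real.exp (t ^ 2 - v) * Real.exp (-(2 * (t * u)) - 2 * t ^ 2) =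
      w ^ 2 / Real.exp v := by
    rw [eq_div_iff hp.ne', hw, ← Real.exp_nat_mul, ← Real.exp_add, ← Real.exp_add]
    congr 1; push_cast; ring
  have key : w - Real.exp v ≤ w ^ 2 / Real.exp v / 4 := by
    rw [div_div, le_div_iff₀ (by positivity)]
    nlinarith [sq_nonneg (w - 2 * Real.exp v)]
  calc C * (B * w) - Real.exp v * (C * B)
      = C * B * (w - Real.exp v) := by ring
    _ ≤ C * B * (w ^ 2 / Real.exp v / 4) := by
        apply mul_le_mul_of_nonneg_left key (by positivity)
    _ = Real.exp (t ^ 2 - v) / 4 * (C * (B * (Real.exp (-(2 * (t * u)) - 2 * t ^ 2)))) := by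
        rw [mul_comm (Real.exp (t ^ 2 - v) / 4)]
        rw [show C * (B * Real.exp (-(2 * (t * u)) - 2 * t ^ 2)) *
            (Real.exp (t ^ 2 - v) / 4)
          = C * B * (Real.exp (t ^ 2 - v) * Real.exp (-(2 * (t * u)) - 2 * t ^ 2) / 4) by ring,
          hsq]

/-- Key bound: the Gaussian hockey-stick part is at most `e^{t²-v}/4`. -/
lemma hockey_stick_bound (t : ℝ) (v : ℝ) :
    Phi (t / 2 - v / t) - Real.exp v * Phi (-(t / 2) - v / t)
      ≤ Real.exp (t ^ 2 - v) / 4 := by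
  set c : ℝ := -(t / 2) - v / t with hc
  have harg : t / 2 - v / t = c + t := by rw [hc]; ring
  rw [harg, Phi_shift t c, Phi_eq_integral]
  have hint1 : Integrable (fun u => gaussianPDFReal (-t) 1 u)
      (volume.restrict (Set.Iic c)) := (integrable_gaussianPDFReal (-t) 1).restrict
  have hint2 : Integrable (fun u => Real.exp v * gaussianPDFReal 0 1 u)
      (volume.restrict (Set.Iic c)) :=
    ((integrable_gaussianPDFReal 0 1).restrict).const_mul _
  have hint3 : Integrable (fun u => Real.exp (t ^ 2 - v) / 4 * gaussianPDFReal (-2 * t) 1 u)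
      (volume.restrict (Set.Iic c)) :=
    ((integrable_gaussianPDFReal (-2 * t) 1).restrict).const_mul _
  rw [← integral_const_mul, ← integral_sub hint1 hint2]
  calc (∫ u in Set.Iic c,
        (gaussianPDFReal (-t) 1 u - Real.exp v * gaussianPDFReal 0 1 u))
      ≤ ∫ u in Set.Iic c, Real.exp (t ^ 2 - v) / 4 * gaussianPDFReal (-2 * t) 1 u :=
        integral_mono (hint1.sub hint2) hint3 fun u => pointwise_bound t v u
    _ ≤ ∫ u, Real.exp (t ^ 2 - v) / 4 * gaussianPDFReal (-2 * t) 1 u := by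
        apply setIntegral_le_integral ((integrable_gaussianPDFReal (-2 * t) 1).const_mul _)
        exact Filter.Eventually.of_forall fun u =>
          mul_nonneg (by positivity) (gaussianPDFReal_nonneg _ _ _)
    _ = Real.exp (t ^ 2 - v) / 4 * ∫ u, gaussianPDFReal (-2 * t) 1 u := by
        rw [integral_const_mul]
    _ = Real.exp (t ^ 2 - v) / 4 := by
        rw [integral_gaussianPDFReal_eq_one _ one_ne_zero, mul_one]

/-- Simplified failure bound: with Δ̃ = LΔ, the optimal-over-v failure probability
δ̃ = inf_v [δ·e^v + Φ(LΔ/(2σ) - vσ/(LΔ)) - e^v·Φ(-LΔ/(2σ) - vσ/(LΔ))] satisfies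
δ̃ ≤ exp(L²Δ²/σ²) · δ^{1/2}. -/
theorem simplified_failure_bound (L Δ σ δ : ℝ) (hσ : 0 < σ) (hLΔ : 0 < L * Δ)
    (hδ0 : 0 ≤ δ) (hδ1 : δ ≤ 1) :
    (⨅ v : ℝ, (δ * Real.exp v + Phi (L * Δ / (2 * σ) - v * σ / (L * Δ))
        - Real.exp v * Phi (-(L * Δ / (2 * σ)) - v * σ / (L * Δ))))
      ≤ Real.exp (L ^ 2 * Δ ^ 2 / σ ^ 2) * δ ^ ((1 : ℝ) / 2) := by
  set t : ℝ := L * Δ / σ with htdef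
  have ht : 0 < t := div_pos hLΔ hσ
  have ht2 : t ^ 2 = L ^ 2 * Δ ^ 2 / σ ^ 2 := by
    rw [htdef, div_pow]; ring_nf
  have e1 : L * Δ / (2 * σ) = t / 2 := by
    rw [htdef, div_div, mul_comm σ 2]
  have e2 : ∀ v : ℝ, v * σ / (L * Δ) = v / t := by
    intro v; rw [htdef, div_div_eq_mul_div]
  have hRHS0 : 0 ≤ Real.exp (L ^ 2 * Δ ^ 2 / σ ^ 2) * δ ^ ((1 : ℝ) / 2) :=
    mul_nonneg (Real.exp_pos _).le (Real.rpow_nonneg hδ0 _)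
  set f : ℝ → ℝ := fun v => δ * Real.exp v + Phi (L * Δ / (2 * σ) - v * σ / (L * Δ))
      - Real.exp v * Phi (-(L * Δ / (2 * σ)) - v * σ / (L * Δ)) with hf
  have hfbound : ∀ v : ℝ, f v ≤ δ * Real.exp v + Real.exp (t ^ 2 - v) / 4 := by
    intro v
    have := hockey_stick_bound t v
    rw [hf]
    simp only [e1, e2 v]
    linarith
  by_cases hbb : BddBelow (Set.range f)
  · by_cases hδz : δ = 0
    · subst hδz
      rw [Real.zero_rpow (by norm_num), mul_zero]
      refine le_of_forall_gt_imp_ge_of_dense fun ε hε => ?_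
      have hv : f (t ^ 2 - Real.log (4 * ε)) ≤ ε := by
        refine (hfbound _).trans ?_
        rw [zero_mul, zero_add, sub_sub_cancel, Real.exp_log (by positivity)]
        linarith
      exact (ciInf_le hbb _).trans hv
    · have hδpos : 0 < δ := lt_of_le_of_ne hδ0 (Ne.symm hδz)
      have hhalf : 0 < δ ^ ((1 : ℝ) / 2) := Real.rpow_pos_of_pos hδpos _
      set v₀ : ℝ := t ^ 2 / 2 - Real.log (2 * δ ^ ((1 : ℝ) / 2)) with hv₀
      have hev₀ : Real.exp v₀ = Real.exp (t ^ 2 / 2) / (2 * δ ^ ((1 : ℝ) / 2)) := by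
        rw [hv₀, Real.exp_sub, Real.exp_log (by positivity)]
      have hsum : δ * Real.exp v₀ + Real.exp (t ^ 2 - v₀) / 4
          = δ ^ ((1 : ℝ) / 2) * Real.exp (t ^ 2 / 2) := by
        have hδsplit : δ = δ ^ ((1 : ℝ) / 2) * δ ^ ((1 : ℝ) / 2) := by
          rw [← Real.rpow_add hδpos]; norm_num
        have hexp2 : Real.exp (t ^ 2 - v₀)
            = Real.exp (t ^ 2 / 2) * (2 * δ ^ ((1 : ℝ) / 2)) := by
          rw [hv₀, show t ^ 2 - (t ^ 2 / 2 - Real.log (2 * δ ^ ((1 : ℝ) / 2)))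
            = t ^ 2 / 2 + Real.log (2 * δ ^ ((1 : ℝ) / 2)) by ring,
            Real.exp_add, Real.exp_log (by positivity)]
        rw [hev₀, hexp2]
        field_simp
        nlinarith [hδsplit, Real.exp_pos (t ^ 2 / 2), hhalf]
      have h1 : (⨅ v : ℝ, f v) ≤ f v₀ := ciInf_le hbb v₀
      have h2 : f v₀ ≤ δ ^ ((1 : ℝ) / 2) * Real.exp (t ^ 2 / 2) := by
        rw [← hsum]; exact hfbound v₀
      refine (h1.trans h2).trans ?_
      rw [mul_comm]
      apply mul_le_mul_of_nonneg_right _ hhalf.le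
      rw [← ht2]
      exact Real.exp_le_exp.mpr (by nlinarith [sq_nonneg t])
  · rw [Real.iInf_of_not_bddBelow hbb]
    exact hRHS0
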